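/- The group defined by the presentation ⟨h, x | h⁵, x² h² x⁻¹ h⟩ (the quotient of the free group on two generators h, x by the normal closure of the relators h⁵ and x² h² x⁻¹ h) is finite of order 55. -/

import Mathlib

/-- The relators `h⁵` and `x² h² x⁻¹ h` in the free group on two generators
`h = of 0`, `x = of 1`. -/
def stmt18Rels : Set (FreeGroup (Fin 2)) :=
  {FreeGroup.of 0 ^ 5,
   FreeGroup.of 1 ^ 2 * FreeGroup.of 0 ^ 2 * (FreeGroup.of 1)⁻¹ * FreeGroup.of 0}

section Chain

variable {G : Type*} [Group G]

private lemma s18_conjpow (x y : G) (n : ℕ) : (x⁻¹*(y*x))^n = x⁻¹*(y^n*x) := by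
  induction n with
  | zero => group
  | succ n ih => rw [pow_succ, ih, pow_succ]; group

private lemma s18_chain (a b : G) (ha : a^5 = 1) (hr : b^2*a^2*b⁻¹*a = 1) :
    (b*a^3)^11 = 1 ∧ a*(b*a^3) = (b*a^3)^9*a ∧ b = (b*a^3)*a^2 := by
  have hb : b*b = a^4*(b*a^3) := by
    rw [pow_two] at hr
    calc b*b = (b*b*a^2*b⁻¹*a) * (a⁻¹*(b*a⁻¹*a⁻¹)) := by group
    _ = 1 * (a⁻¹*(b*a⁻¹*a⁻¹)) := by rw [hr]
    _ = a^4*(a^5)⁻¹*(b*(a^3*(a^5)⁻¹)) := by group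
    _ = a^4*(1:G)⁻¹*(b*(a^3*(1:G)⁻¹)) := by rw [ha]
    _ = a^4*(b*a^3) := by group
  set p : G := b*a^3 with hp
  set q : G := a^2*b*a with hq
  -- t relations
  have trel0 : p * q = a^4*b*a^4 := by
    calc p * q = b*a^5*(b*a) := by rw [hp, hq]; group
    _ = b*1*(b*a) := by rw [ha]
    _ = (b*b)*a := by group
    _ = (a^4*(b*a^3))*a := by rw [hb]
    _ = a^4*b*a^4 := by group
  have trel1 : (a*b*a^2) * (a^3*b) = p := by
    calc (a*b*a^2) * (a^3*b) = a*(b*a^5*b) := by group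
    _ = a*(b*1*b) := by rw [ha]
    _ = a*(b*b) := by group
    _ = a*(a^4*(b*a^3)) := by rw [hb]
    _ = a^5*(b*a^3) := by group
    _ = 1*(b*a^3) := by rw [ha]
    _ = p := by rw [hp]; group
  have trel2 : q * (a^4*b*a^4) = a*b*a^2 := by
    calc q * (a^4*b*a^4) = a^2*(b*a^5*b)*a^4 := by rw [hq]; group
    _ = a^2*(b*1*b)*a^4 := by rw [ha]
    _ = a^2*(b*b)*a^4 := by group
    _ = a^2*(a^4*(b*a^3))*a^4 := by rw [hb]
    _ = a*a^5*(b*(a^2*a^5)) := by group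
    _ = a*1*(b*(a^2*1)) := by rw [ha]
    _ = a*b*a^2 := by group
  have trel3 : (a^3*b) * p = q := by
    calc (a^3*b) * p = a^3*(b*b)*a^3 := by rw [hp]; group
    _ = a^3*(a^4*(b*a^3))*a^3 := by rw [hb]
    _ = a^2*a^5*(b*(a*a^5)) := by group
    _ = a^2*1*(b*(a*1)) := by rw [ha]
    _ = q := by rw [hq]; group
  have trel4 : (a^4*b*a^4) * (a*b*a^2) = a^3*b := by
    calc (a^4*b*a^4) * (a*b*a^2) = a^4*(b*a^5*b)*a^2 := by group
    _ = a^4*(b*1*b)*a^2 := by rw [ha]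
    _ = a^4*(b*b)*a^2 := by group
    _ = a^4*(a^4*(b*a^3))*a^2 := by rw [hb]
    _ = a^3*(a^5*(b*a^5)) := by group
    _ = a^3*(1*(b*1)) := by rw [ha]
    _ = a^3*b := by group
  -- derived relations
  have h1 : a*b*a^2 = q*(p*q) := by rw [← trel2, ← trel0]
  have h3 : a^3*b = q*p⁻¹ := by rw [← trel3]; group
  have RA : q*(p*(q*q)) = p*p := by
    have := trel1
    rw [h1, h3] at this
    calc q*(p*(q*q)) = ((q*(p*q)) * (q*p⁻¹)) * p := by group
    _ = p * p := by rw [this]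
  have RB : (p*q)*(q*(p*q)) = q*p⁻¹ := by
    have := trel4
    rw [h1, h3, ← trel0] at this
    exact this
  have hqq' : q*q = (q*p)⁻¹*(p*p) := by
    calc q*q = (q*p)⁻¹*(q*(p*(q*q))) := by group
    _ = (q*p)⁻¹*(p*p) := by rw [RA]
  have hX : q*p⁻¹ = q⁻¹*(p*(p*(p*q))) := by
    calc q*p⁻¹ = (p*q)*(q*(p*q)) := by rw [RB]
    _ = p*((q*q)*(p*q)) := by group
    _ = p*(((q*p)⁻¹*(p*p))*(p*q)) := by rw [hqq']
    _ = q⁻¹*(p*(p*(p*q))) := by group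
  have hE4 : q*q = p^3*(q*p) := by
    calc q*q = q*((q*p⁻¹)*p) := by group
    _ = q*((q⁻¹*(p*(p*(p*q))))*p) := by rw [hX]
    _ = p^3*(q*p) := by rw [show (p:G)^3 = p*p*p from by rw [pow_succ, pow_two]]; group
  have hE5 : p = q*(p^4*q) := by
    have h : p*p = (q*(p^4*q))*p := by
      calc p*p = q*(p*(q*q)) := by rw [RA]
      _ = q*(p*(p^3*(q*p))) := by rw [hE4]
      _ = (q*(p^4*q))*p := by group
    exact mul_right_cancel h
  have hF2 : q = p^6*(q*p^5) := by
    have h : q*q = (p^6*(q*p^5))*q := by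
      have h2 : p*p = q*(p^7*(q*(p^5*q))) := by
        calc p*p = (q*(p^4*q))*(q*(p^4*q)) := by rw [← hE5]
        _ = q*(p^4*((q*q)*p^4))*q := by group
        _ = q*(p^4*((p^3*(q*p))*p^4))*q := by rw [hE4]
        _ = q*(p^7*(q*(p^5*q))) := by group
      have h3 : q*(p*(q*q)) = q*(p^7*(q*(p^5*q))) := by rw [RA]; exact h2
      have h4 : p*(q*q) = p^7*(q*(p^5*q)) := mul_left_cancel h3
      calc q*q = p⁻¹*(p*(q*q)) := by group
      _ = p⁻¹*(p^7*(q*(p^5*q))) := by rw [h4]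
      _ = (p^6*(q*p^5))*q := by group
    exact mul_right_cancel h
  have hG1 : q*(p*q⁻¹) = (p^3)⁻¹*q := by
    calc q*(p*q⁻¹) = (p^3)⁻¹*((p^3*(q*p))*q⁻¹) := by group
    _ = (p^3)⁻¹*((q*q)*q⁻¹) := by rw [← hE4]
    _ = (p^3)⁻¹*q := by group
  have hG2 : q^4 = p^5 := by
    calc q^4 = q*((q*(p*q⁻¹))⁻¹*(q*(p*(q*q)))) := by
          rw [show (q:G)^4 = q*q*q*q from by rw [pow_succ, pow_succ, pow_two]]; group
    _ = q*(((p^3)⁻¹*q)⁻¹*(p*p)) := by rw [hG1, RA]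
    _ = p^5 := by group
  have hF2' : q⁻¹*(p^6*q) = (p^5)⁻¹ := by
    calc q⁻¹*(p^6*q) = q⁻¹*(p^6*(q*p^5))*(p^5)⁻¹ := by group
    _ = q⁻¹*q*(p^5)⁻¹ := by rw [← hF2]
    _ = (p^5)⁻¹ := by group
  have hXq : q⁻¹*((p^5)⁻¹*q) = (p^5)⁻¹ := by
    rw [← hG2]; group
  have hG4 : q⁻¹*(p*q) = (p^10)⁻¹ := by
    calc q⁻¹*(p*q) = (q⁻¹*(p^6*q))*(q⁻¹*((p^5)⁻¹*q)) := by group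
    _ = (p^5)⁻¹ * (p^5)⁻¹ := by rw [hF2', hXq]
    _ = (p^10)⁻¹ := by group
  -- iterate conjugation
  have hc2 : q⁻¹*((p^10)⁻¹*q) = p^100 := by
    calc q⁻¹*((p^10)⁻¹*q) = ((q⁻¹*(p*q))^10)⁻¹ := by rw [s18_conjpow]; group
    _ = (((p^10)⁻¹)^10)⁻¹ := by rw [hG4]
    _ = p^100 := by group
  have hc3 : q⁻¹*(p^100*q) = ((p^10)^100)⁻¹ := by
    calc q⁻¹*(p^100*q) = (q⁻¹*(p*q))^100 := by rw [s18_conjpow]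
    _ = ((p^10)⁻¹)^100 := by rw [hG4]
    _ = ((p^10)^100)⁻¹ := by group
  have hc4 : q⁻¹*(((p^10)^100)⁻¹*q) = p^10000 := by
    calc q⁻¹*(((p^10)^100)⁻¹*q) = ((q⁻¹*(p*q))^1000)⁻¹ := by
          rw [s18_conjpow]; group
    _ = (((p^10)⁻¹)^1000)⁻¹ := by rw [hG4]
    _ = p^10000 := by group
  have d4 : q⁻¹*((q⁻¹*((q⁻¹*((q⁻¹*(p*q))*q))*q))*q) = p^10000 := by
    rw [hG4, hc2, hc3, hc4]
  have e1 : (q^4)⁻¹*(p*q^4) = p^10000 := by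
    rw [← d4, show (q:G)^4 = q*q*q*q from by rw [pow_succ, pow_succ, pow_two]]; group
  have e2 : (q^4)⁻¹*(p*q^4) = p := by rw [hG2]; group
  have hpp : p^10000 = p := e1.symm.trans e2
  have hp9999 : p^9999 = 1 := by
    calc p^9999 = p^10000 * p⁻¹ := by group
    _ = p * p⁻¹ := by rw [hpp]
    _ = 1 := by group
  have hp55 : p^55 = 1 := by
    have h1' : q⁻¹*(p^5*q) = p^5 := by rw [← hG2]; group
    have h2' : q⁻¹*(p^5*q) = ((p^10)⁻¹)^5 := by
      rw [← s18_conjpow, hG4]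
    have h3' : p^5 = ((p^10)⁻¹)^5 := h1'.symm.trans h2'
    calc p^55 = p^5 * (p^10)^5 := by group
    _ = ((p^10)⁻¹)^5 * (p^10)^5 := by rw [← h3']
    _ = 1 := by group
  have hp11 : p^11 = 1 := by
    have ha' : p^9999 * p^11 = (p^55)^182 := by
      rw [← pow_mul]
      norm_num
      group
    rw [hp55, hp9999, one_pow, one_mul] at ha'
    exact ha'
  have h10 : (p^10)⁻¹ = p := by
    apply inv_eq_of_mul_eq_one_left
    calc p * p^10 = p^11 := by group
    _ = 1 := hp11
  have hcomm : q⁻¹*(p*q) = p := hG4.trans h10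
  have hpq : p*q = q*p := by
    calc p*q = q*(q⁻¹*(p*q)) := by group
    _ = q*p := by rw [hcomm]
  have hL : q*(p*q⁻¹) = p := by
    calc q*(p*q⁻¹) = (q*p)*q⁻¹ := by group
    _ = (p*q)*q⁻¹ := by rw [← hpq]
    _ = p := by group
  have hq4 : q = p^4 := by
    have h := hL.symm.trans hG1
    calc q = p^3*((p^3)⁻¹*q) := by group
    _ = p^3*p := by rw [← h]
    _ = p^4 := by group
  refine ⟨hp11, ?_, ?_⟩
  · have ht1 : a*b*a^2 = p^9 := by
      rw [h1, hq4]; group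
    calc a*p = (a*b*a^2)*a := by rw [hp]; group
    _ = p^9*a := by rw [ht1]
  · calc b = (b*a^3)*a^2*(a^5)⁻¹ := by group
    _ = (b*a^3)*a^2*(1:G)⁻¹ := by rw [ha]
    _ = p*a^2 := by rw [hp]; group

end Chain

/-- multiplication by `9` on `ZMod 11` -/
private def s18A : Equiv.Perm (ZMod 11) := ⟨fun t => 9*t, fun t => 5*t, by decide, by decide⟩
/-- the affine map `t ↦ 4t+1` on `ZMod 11` -/
private def s18B : Equiv.Perm (ZMod 11) := ⟨fun t => 4*t+1, fun t => 3*t+8, by decide, by decide⟩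

private lemma s18A5 : s18A^5 = 1 := by decide
private lemma s18rel2 : s18B^2*s18A^2*s18B⁻¹*s18A = 1 := by decide
private lemma s18T_apply : ∀ t, (s18B*s18A^3) t = t + 1 := by decide
private lemma s18A_apply_zero : s18A 0 = 0 := by decide
private lemma s18A_apply_one : s18A 1 = 9 := by decide
private lemma s18ord : ∀ u v : ZMod 5, (9:ZMod 11)^u.val = 9^v.val → u = v := by decide

private lemma s18_main {H : Type*} [Group H] (a b : H)
    (ha : a^5 = 1) (hr : b^2*a^2*b⁻¹*a = 1)
    (htop : ∀ z : H, z ∈ Subgroup.closure {a, b})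
    (f : H →* Equiv.Perm (ZMod 11)) (hfa : f a = s18A) (hfb : f b = s18B) :
    Nat.card H = 55 := by
  obtain ⟨hp11, hconj, hbpa⟩ := s18_chain a b ha hr
  -- swap lemmas
  have hswap1 : ∀ k : ℕ, a * (b*a^3)^k = (b*a^3)^(9*k) * a := by
    intro k
    induction k with
    | zero => simp
    | succ k ih =>
      calc a*(b*a^3)^(k+1) = (a*(b*a^3)^k)*(b*a^3) := by rw [pow_succ, mul_assoc]
      _ = (b*a^3)^(9*k)*(a*(b*a^3)) := by rw [ih, mul_assoc]
      _ = (b*a^3)^(9*k)*((b*a^3)^9*a) := by rw [hconj]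
      _ = (b*a^3)^(9*k+9)*a := by rw [pow_add, mul_assoc]
      _ = (b*a^3)^(9*(k+1))*a := by rw [show 9*(k+1) = 9*k+9 from by ring]
  have hswap : ∀ j k : ℕ, a^j * (b*a^3)^k = (b*a^3)^(9^j*k) * a^j := by
    intro j
    induction j with
    | zero => intro k; simp
    | succ j ih =>
      intro k
      calc a^(j+1)*(b*a^3)^k = a^j*(a*(b*a^3)^k) := by rw [pow_succ, mul_assoc]
      _ = a^j*((b*a^3)^(9*k)*a) := by rw [hswap1]
      _ = (a^j*(b*a^3)^(9*k))*a := by rw [mul_assoc]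
      _ = ((b*a^3)^(9^j*(9*k))*a^j)*a := by rw [ih]
      _ = (b*a^3)^(9^(j+1)*k)*a^(j+1) := by
            rw [show 9^j*(9*k) = 9^(j+1)*k from by ring, mul_assoc, ← pow_succ]
  -- the subgroup of all `p^i * a^j`
  let S : Subgroup H :=
  { carrier := {z : H | ∃ i j : ℕ, z = (b*a^3)^i * a^j}
    one_mem' := ⟨0, 0, by simp⟩
    mul_mem' := by
      rintro x y ⟨i, j, rfl⟩ ⟨k, l, rfl⟩
      refine ⟨i + 9^j*k, j + l, ?_⟩
      calc (b*a^3)^i*a^j*((b*a^3)^k*a^l)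
          = (b*a^3)^i*((a^j*(b*a^3)^k)*a^l) := by group
      _ = (b*a^3)^i*(((b*a^3)^(9^j*k)*a^j)*a^l) := by rw [hswap]
      _ = (b*a^3)^(i+9^j*k)*a^(j+l) := by rw [pow_add, pow_add]; group
    inv_mem' := by
      rintro x ⟨i, j, rfl⟩
      refine ⟨9^(4*j)*(10*i), 4*j, ?_⟩
      apply inv_eq_of_mul_eq_one_left
      calc (b*a^3)^(9^(4*j)*(10*i))*a^(4*j)*((b*a^3)^i*a^j)
          = (b*a^3)^(9^(4*j)*(10*i))*((a^(4*j)*(b*a^3)^i)*a^j) := by group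
      _ = (b*a^3)^(9^(4*j)*(10*i))*(((b*a^3)^(9^(4*j)*i)*a^(4*j))*a^j) := by rw [hswap]
      _ = (b*a^3)^(9^(4*j)*(10*i)+9^(4*j)*i)*a^(4*j+j) := by rw [pow_add, pow_add]; group
      _ = (b*a^3)^(11*(9^(4*j)*i))*a^(5*j) := by
            rw [show 9^(4*j)*(10*i)+9^(4*j)*i = 11*(9^(4*j)*i) from by ring,
               show 4*j+j = 5*j from by ring]
      _ = 1 := by
            rw [pow_mul (b*a^3) 11, pow_mul a 5, hp11, ha, one_pow, one_pow, one_mul] }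
  have hS : ∀ z : H, ∃ i j : ℕ, z = (b*a^3)^i * a^j := by
    intro z
    have hle : Subgroup.closure {a, b} ≤ S := by
      rw [Subgroup.closure_le]
      rintro x (rfl | rfl)
      · exact ⟨0, 1, by simp⟩
      · exact ⟨1, 2, by rw [pow_one]; exact hbpa⟩
    exact hle (htop z)
  -- the counting bijection
  have hTpow : ∀ i : ℕ, ((s18B*s18A^3)^i) 0 = (i : ZMod 11) := by
    intro i
    induction i with
    | zero => simp
    | succ i ih =>
      rw [pow_succ', Equiv.Perm.mul_apply, ih, s18T_apply]
      push_cast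
      ring
  have hApow0 : ∀ j : ℕ, (s18A^j) 0 = 0 := by
    intro j
    induction j with
    | zero => simp
    | succ j ih => rw [pow_succ', Equiv.Perm.mul_apply, ih, s18A_apply_zero]
  have hApow1 : ∀ j : ℕ, (s18A^j) 1 = 9^j := by
    intro j
    induction j with
    | zero => simp
    | succ j ih =>
      rw [pow_succ', Equiv.Perm.mul_apply, ih]
      show s18A (9^j) = 9^(j+1)
      show (9:ZMod 11) * 9^j = 9^(j+1)
      rw [pow_succ]
      ring
  have hfp : f (b*a^3) = s18B*s18A^3 := by
    rw [map_mul, map_pow, hfa, hfb]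
  set gfun : ZMod 11 × ZMod 5 → H := fun z => (b*a^3)^(z.1.val) * a^(z.2.val) with hgfun
  have hinj : Function.Injective gfun := by
    intro z w h
    have hf := congrArg f h
    rw [hgfun] at hf
    simp only [map_mul, map_pow, hfp, hfa] at hf
    have h0 := congrArg (fun σ : Equiv.Perm (ZMod 11) => σ 0) hf
    simp only [Equiv.Perm.mul_apply] at h0
    rw [hApow0, hApow0, hTpow, hTpow] at h0
    have e1 : z.1 = w.1 := by
      have h1 := ZMod.natCast_rightInverse (n := 11) z.1
      have h2 := ZMod.natCast_rightInverse (n := 11) w.1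
      exact h1.symm.trans (h0.trans h2)
    rw [e1] at hf
    have hA := mul_left_cancel hf
    have h1' := congrArg (fun σ : Equiv.Perm (ZMod 11) => σ 1) hA
    rw [hApow1, hApow1] at h1'
    exact Prod.ext e1 (s18ord _ _ h1')
  have hsurj : Function.Surjective gfun := by
    intro z
    obtain ⟨i, j, hz⟩ := hS z
    refine ⟨((i : ZMod 11), (j : ZMod 5)), ?_⟩
    rw [hgfun]
    simp only [ZMod.val_natCast]
    rw [hz]
    congr 1
    · conv_rhs => rw [← Nat.div_add_mod i 11]
      rw [pow_add, pow_mul, hp11, one_pow, one_mul]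
    · conv_rhs => rw [← Nat.div_add_mod j 5]
      rw [pow_add, pow_mul, ha, one_pow, one_mul]
  have := Nat.card_eq_of_bijective gfun ⟨hinj, hsurj⟩
  rw [← this, Nat.card_prod, Nat.card_zmod, Nat.card_zmod]

/-- The group `⟨h, x | h⁵, x² h² x⁻¹ h⟩` is finite of order `55`. -/
theorem stmt_18 : Nat.card (PresentedGroup stmt18Rels) = 55 := by
  have hmem1 : (FreeGroup.of 0 ^ 5 : FreeGroup (Fin 2)) ∈ stmt18Rels :=
    Set.mem_insert _ _
  have hmem2 : (FreeGroup.of 1 ^ 2 * FreeGroup.of 0 ^ 2 * (FreeGroup.of 1)⁻¹ * FreeGroup.of 0 :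
      FreeGroup (Fin 2)) ∈ stmt18Rels := by
    right; rfl
  have ha : (PresentedGroup.of (rels := stmt18Rels) 0)^5 = 1 := by
    rw [show (PresentedGroup.of (rels := stmt18Rels) 0) =
        (PresentedGroup.mk stmt18Rels) (FreeGroup.of 0) from rfl,
      ← map_pow (PresentedGroup.mk stmt18Rels)]
    exact PresentedGroup.one_of_mem hmem1
  have hr : (PresentedGroup.of (rels := stmt18Rels) 1)^2 *
      (PresentedGroup.of (rels := stmt18Rels) 0)^2 *
      (PresentedGroup.of (rels := stmt18Rels) 1)⁻¹ *
      (PresentedGroup.of (rels := stmt18Rels) 0) = 1 := by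
    rw [show (PresentedGroup.of (rels := stmt18Rels) 0) =
        (PresentedGroup.mk stmt18Rels) (FreeGroup.of 0) from rfl,
      show (PresentedGroup.of (rels := stmt18Rels) 1) =
        (PresentedGroup.mk stmt18Rels) (FreeGroup.of 1) from rfl,
      ← map_pow (PresentedGroup.mk stmt18Rels), ← map_pow (PresentedGroup.mk stmt18Rels), ← map_inv (PresentedGroup.mk stmt18Rels),
      ← map_mul (PresentedGroup.mk stmt18Rels), ← map_mul (PresentedGroup.mk stmt18Rels), ← map_mul (PresentedGroup.mk stmt18Rels)]
    exact PresentedGroup.one_of_mem hmem2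
  have htop : ∀ z : PresentedGroup stmt18Rels,
      z ∈ Subgroup.closure {PresentedGroup.of 0, PresentedGroup.of 1} := by
    have hrange : (Set.range (PresentedGroup.of : Fin 2 → PresentedGroup stmt18Rels))
        = {PresentedGroup.of 0, PresentedGroup.of 1} := by
      ext x
      simp [Fin.exists_fin_two, eq_comm]
    intro z
    have := PresentedGroup.closure_range_of stmt18Rels
    rw [hrange] at this
    rw [this]
    exact Subgroup.mem_top z
  have hcheck : ∀ r ∈ stmt18Rels, FreeGroup.lift (![s18A, s18B]) r = 1 := by
    intro r hrr
    simp only [stmt18Rels, Set.mem_insert_iff, Set.mem_singleton_iff] at hrr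
    rcases hrr with rfl | rfl
    · simp only [map_pow, FreeGroup.lift_apply_of, Matrix.cons_val_zero]
      exact s18A5
    · simp only [map_mul, map_pow, map_inv, FreeGroup.lift_apply_of,
        Matrix.cons_val_zero, Matrix.cons_val_one, Matrix.head_cons]
      exact s18rel2
  exact s18_main (PresentedGroup.of 0) (PresentedGroup.of 1) ha hr htop
    (PresentedGroup.toGroup hcheck)
    (PresentedGroup.toGroup.of hcheck) (PresentedGroup.toGroup.of hcheck)
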